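/- Let 0 ≤ α < 1 and c_α the smallest positive root of 2√x - (1+α) tan √x = 0. For any ε > 0 with c = c_α + ε (and √c < π/2, say), the function f(z) = √c cot(√c z) satisfies S_f(z) = 2c for all z, but f is not meromorphically convex of order α in the unit disk: there exists x_0 ∈ (0,1) with -Re(1 + x_0 f''(x_0)/f'(x_0)) ≤ α. -/

import Mathlib

/-- The Schwarzian derivative `S_f = (f''/f')' - (1/2)(f''/f')^2`. -/
noncomputable def schwarzian (f : ℂ → ℂ) (z : ℂ) : ℂ :=
  deriv (fun w => deriv (deriv f) w / deriv f w) z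
    - (1 / 2) * (deriv (deriv f) z / deriv f z) ^ 2

/-- Theorem 1(b) (sharpness): for `c = c_α + ε > c_α` (with `√c < π/2`), the function
`f(z) = √c cot(√c z)` has `S_f ≡ 2c` but is not meromorphically convex of order `α`. -/
theorem sharpness (α cα ε : ℝ) (hα0 : 0 ≤ α) (hα1 : α < 1)
    (hcα : 0 < cα)
    (hroot : 2 * Real.sqrt cα - (1 + α) * Real.tan (Real.sqrt cα) = 0)
    (hmin : ∀ x : ℝ, 0 < x →
      2 * Real.sqrt x - (1 + α) * Real.tan (Real.sqrt x) = 0 → cα ≤ x)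
    (hε : 0 < ε) (c : ℝ) (hc : c = cα + ε)
    (hcπ : Real.sqrt c < Real.pi / 2)
    (f : ℂ → ℂ)
    (hf : ∀ z, f z = (Real.sqrt c : ℂ) *
      (Complex.cos ((Real.sqrt c : ℂ) * z) / Complex.sin ((Real.sqrt c : ℂ) * z))) :
    (∀ z : ℂ, Complex.sin ((Real.sqrt c : ℂ) * z) ≠ 0 → schwarzian f z = 2 * c) ∧
      ∃ x₀ : ℝ, 0 < x₀ ∧ x₀ < 1 ∧
        (-(1 + (x₀ : ℂ) * deriv (deriv f) x₀ / deriv f x₀)).re ≤ α := by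
  have hc0 : 0 < c := by rw [hc]; linarith
  set s : ℂ := (Real.sqrt c : ℂ) with hs_def
  have hsr : 0 < Real.sqrt c := Real.sqrt_pos.mpr hc0
  have hs0 : s ≠ 0 := by
    simp only [hs_def, ne_eq, Complex.ofReal_eq_zero]
    exact ne_of_gt hsr
  have hs2 : s ^ 2 = (c : ℂ) := by
    rw [hs_def]
    norm_cast
    exact Real.sq_sqrt hc0.le
  -- basic derivatives
  have hsin : ∀ w : ℂ, HasDerivAt (fun w => Complex.sin (s*w)) (Complex.cos (s*w) * s) w :=
    fun w => by simpa using ((hasDerivAt_id w).const_mul s).csin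
  have hcos : ∀ w : ℂ, HasDerivAt (fun w => Complex.cos (s*w)) (-Complex.sin (s*w) * s) w :=
    fun w => by simpa using ((hasDerivAt_id w).const_mul s).ccos
  -- first derivative of f
  have key1 : ∀ z : ℂ, Complex.sin (s*z) ≠ 0 →
      HasDerivAt f (-s^2 / Complex.sin (s*z)^2) z := by
    intro z hz
    have hfe : f = fun w => s * (Complex.cos (s*w) / Complex.sin (s*w)) := funext hf
    rw [hfe]
    have H := (((hcos z).div (hsin z) hz)).const_mul s
    refine H.congr_deriv ?_
    have h1 := Complex.sin_sq_add_cos_sq (s*z)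
    field_simp
    linear_combination (-1) * h1
  -- openness of the set where sin (s z) ≠ 0
  have hU : IsOpen {z : ℂ | Complex.sin (s*z) ≠ 0} := by
    have : Continuous fun z : ℂ => Complex.sin (s*z) :=
      Complex.continuous_sin.comp (continuous_const.mul continuous_id)
    exact isOpen_compl_iff.mpr (isClosed_singleton.preimage this)
  have hmem : ∀ z : ℂ, Complex.sin (s*z) ≠ 0 →
      {z : ℂ | Complex.sin (s*z) ≠ 0} ∈ nhds z := fun z hz => hU.mem_nhds hz
  have hd1 : ∀ z : ℂ, Complex.sin (s*z) ≠ 0 →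
      deriv f z = -s^2 / Complex.sin (s*z)^2 := fun z hz => (key1 z hz).deriv
  have hd1e : ∀ z : ℂ, Complex.sin (s*z) ≠ 0 →
      deriv f =ᶠ[nhds z] fun w => -s^2 / Complex.sin (s*w)^2 := by
    intro z hz
    exact Filter.eventually_of_mem (hmem z hz) (fun w hw => hd1 w hw)
  -- second derivative of f
  have key2 : ∀ z : ℂ, Complex.sin (s*z) ≠ 0 →
      HasDerivAt (deriv f) (2*s^3 * Complex.cos (s*z) / Complex.sin (s*z)^3) z := by
    intro z hz
    have hden : HasDerivAt (fun w => Complex.sin (s*w)^2)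
        (Complex.cos (s*z) * s * Complex.sin (s*z) + Complex.sin (s*z) * (Complex.cos (s*z) * s)) z := by
      have H0 := (hsin z).mul (hsin z)
      simp only [pow_two]
      exact H0
    have hz2 : Complex.sin (s*z)^2 ≠ 0 := pow_ne_zero _ hz
    have H := (hasDerivAt_const z (-s^2)).div hden hz2
    have H2 : HasDerivAt (fun w => -s^2 / Complex.sin (s*w)^2)
        (2*s^3 * Complex.cos (s*z) / Complex.sin (s*z)^3) z := by
      refine H.congr_deriv ?_
      field_simp
      ring
    exact H2.congr_of_eventuallyEq (hd1e z hz)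
  have hd2 : ∀ z : ℂ, Complex.sin (s*z) ≠ 0 →
      deriv (deriv f) z = 2*s^3 * Complex.cos (s*z) / Complex.sin (s*z)^3 :=
    fun z hz => (key2 z hz).deriv
  constructor
  · -- Schwarzian part
    intro z hz
    have hratio : ∀ w : ℂ, Complex.sin (s*w) ≠ 0 →
        deriv (deriv f) w / deriv f w = -2*s * (Complex.cos (s*w) / Complex.sin (s*w)) := by
      intro w hw
      rw [hd2 w hw, hd1 w hw]
      field_simp
    have hre : (fun w => deriv (deriv f) w / deriv f w) =ᶠ[nhds z]
        fun w => -2*s * (Complex.cos (s*w) / Complex.sin (s*w)) :=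
      Filter.eventually_of_mem (hmem z hz) (fun w hw => hratio w hw)
    have H3 : HasDerivAt (fun w => -2*s * (Complex.cos (s*w) / Complex.sin (s*w)))
        (2*s^2 / Complex.sin (s*z)^2) z := by
      have H := (((hcos z).div (hsin z) hz)).const_mul (-2*s)
      refine H.congr_deriv ?_
      have h1 := Complex.sin_sq_add_cos_sq (s*z)
      field_simp
      linear_combination h1
    have H4 : deriv (fun w => deriv (deriv f) w / deriv f w) z
        = 2*s^2 / Complex.sin (s*z)^2 := (H3.congr_of_eventuallyEq hre).deriv
    rw [schwarzian, H4, hratio z hz]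
    have h1 := Complex.sin_sq_add_cos_sq (s*z)
    rw [← hs2]
    field_simp
    linear_combination (-1) * h1
  · -- sharpness part
    have hca_lt : Real.sqrt cα < Real.sqrt c := by
      apply Real.sqrt_lt_sqrt hcα.le
      rw [hc]; linarith
    have hcar : 0 < Real.sqrt cα := Real.sqrt_pos.mpr hcα
    refine ⟨Real.sqrt cα / Real.sqrt c, div_pos hcar hsr, (div_lt_one hsr).mpr hca_lt, ?_⟩
    set x₀ : ℝ := Real.sqrt cα / Real.sqrt c with hx₀
    have hsx : s * (x₀ : ℂ) = (Real.sqrt cα : ℂ) := by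
      rw [hs_def, hx₀]
      push_cast
      field_simp
      exact mul_div_cancel_left₀ _ (by exact_mod_cast hsr.ne')
    have hsinr : 0 < Real.sin (Real.sqrt cα) := by
      apply Real.sin_pos_of_pos_of_lt_pi hcar
      linarith [Real.pi_pos, hca_lt, hcπ]
    have hcosr : 0 < Real.cos (Real.sqrt cα) := by
      apply Real.cos_pos_of_mem_Ioo
      constructor <;> [linarith [Real.pi_pos]; linarith]
    have hsz : Complex.sin (s * (x₀ : ℂ)) ≠ 0 := by
      rw [hsx, ← Complex.ofReal_sin]
      exact_mod_cast ne_of_gt hsinr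
    have hE : -(1 + (x₀ : ℂ) * deriv (deriv f) (x₀:ℂ) / deriv f (x₀:ℂ)) = (α : ℂ) := by
      rw [hd2 _ hsz, hd1 _ hsz]
      have hsin2 : Complex.sin (s * (x₀:ℂ)) ^ 2 ≠ 0 := pow_ne_zero _ hsz
      have hcosC : Complex.cos (s * (x₀:ℂ)) = (Real.cos (Real.sqrt cα) : ℂ) := by
        rw [hsx, Complex.ofReal_cos]
      have hsinC : Complex.sin (s * (x₀:ℂ)) = (Real.sin (Real.sqrt cα) : ℂ) := by
        rw [hsx, Complex.ofReal_sin]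
      -- the real root equation: 2 √cα cos = (1+α) sin
      have hr : 2 * Real.sqrt cα * Real.cos (Real.sqrt cα)
          = (1 + α) * Real.sin (Real.sqrt cα) := by
        have ht : Real.tan (Real.sqrt cα)
            = Real.sin (Real.sqrt cα) / Real.cos (Real.sqrt cα) := Real.tan_eq_sin_div_cos _
        rw [ht] at hroot
        field_simp at hroot
        linarith
      have hrC : 2 * (Real.sqrt cα : ℂ) * Complex.cos (s * (x₀:ℂ))
          = (1 + (α:ℂ)) * Complex.sin (s * (x₀:ℂ)) := by
        rw [hcosC, hsinC]
        exact_mod_cast hr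
      have hx0C : (x₀ : ℂ) * s = (Real.sqrt cα : ℂ) := by rw [mul_comm]; exact hsx
      field_simp
      have hsz2 : Complex.sin ((x₀:ℂ) * s) ≠ 0 := by rwa [mul_comm]
      field_simp
      rw [mul_comm (x₀:ℂ) s]
      linear_combination hrC + (2*Complex.cos (s*(x₀:ℂ))) * hx0C
    rw [hE]
    simp
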